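/- arXiv:2108.13007 — 4 statements merged into one kernel-verified Lean document; each statement's English description precedes it below -/
import Mathlib

section
/- Let Ω be a finite subset of a locally finite weighted graph, with nonempty interior Ω°. Suppose u, û : V × [0,∞) → ℝ are continuously differentiable in t, both vanish on (V \ Ω°) × [0,∞), agree at t = 0, and both satisfy ∂_t u + |u|^{p−1} u = Δu on Ω° × [0,∞) for some p ≥ 1. Then u = û on V × [0,∞). -/
lemma heat_mono_aux {p : ℝ} (hp : 1 ≤ p) {b a : ℝ} (hba : b ≤ a) :
    |b| ^ (p - 1) * b ≤ |a| ^ (p - 1) * a := by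
  have hpm : (0:ℝ) ≤ p - 1 := by linarith
  rcases le_total 0 b with hb | hb
  · have ha : 0 ≤ a := hb.trans hba
    have habs : |b| ≤ |a| := by rw [abs_of_nonneg hb, abs_of_nonneg ha]; exact hba
    exact mul_le_mul (Real.rpow_le_rpow (abs_nonneg b) habs hpm) hba hb
      (Real.rpow_nonneg (abs_nonneg a) _)
  · rcases le_total a 0 with ha | ha
    · have habs : |a| ≤ |b| := by rw [abs_of_nonpos hb, abs_of_nonpos ha]; linarith
      have key : |a| ^ (p-1) * (-a) ≤ |b| ^ (p-1) * (-b) :=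
        mul_le_mul (Real.rpow_le_rpow (abs_nonneg a) habs hpm) (by linarith)
          (by linarith) (Real.rpow_nonneg (abs_nonneg b) _)
      linarith
    · have h1 : |b| ^ (p-1) * b ≤ 0 :=
        mul_nonpos_iff.mpr (Or.inl ⟨Real.rpow_nonneg (abs_nonneg b) _, hb⟩)
      have h2 : 0 ≤ |a| ^ (p-1) * a :=
        mul_nonneg (Real.rpow_nonneg (abs_nonneg a) _) ha
      linarith

lemma heat_mono {p : ℝ} (hp : 1 ≤ p) (a b : ℝ) :
    0 ≤ (a - b) * (|a| ^ (p - 1) * a - |b| ^ (p - 1) * b) := by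
  rcases le_total b a with h | h
  · exact mul_nonneg (sub_nonneg.mpr h) (sub_nonneg.mpr (heat_mono_aux hp h))
  · have := heat_mono_aux hp h
    nlinarith

lemma heat_green {V : Type*}
    (N : V → Finset V) (hNsym : ∀ x y, x ∈ N y ↔ y ∈ N x)
    (ω : V → V → ℝ) (hωpos : ∀ x, ∀ y ∈ N x, 0 < ω x y)
    (hωsym : ∀ x y, ω x y = ω y x)
    (Ω int : Finset V)
    (hint : ∀ x, x ∈ int ↔ x ∈ Ω ∧ ∀ y ∈ N x, y ∈ Ω)
    (w : V → ℝ) (hw0 : ∀ x ∉ int, w x = 0) :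
    ∑ x ∈ int, w x * ∑ y ∈ N x, ω x y * (w y - w x) ≤ 0 := by
  classical
  have hsub : int ⊆ Ω := fun x hx => ((hint x).1 hx).1
  set F : V → V → ℝ := fun x y => if y ∈ N x then ω x y * w x * (w y - w x) else 0 with hF
  have step1 : ∑ x ∈ int, w x * ∑ y ∈ N x, ω x y * (w y - w x)
      = ∑ x ∈ Ω, w x * ∑ y ∈ N x, ω x y * (w y - w x) := by
    refine Finset.sum_subset hsub fun x _ hx => ?_
    rw [hw0 x hx, zero_mul]
  have step2 : ∀ x ∈ Ω, w x * ∑ y ∈ N x, ω x y * (w y - w x) = ∑ y ∈ Ω, F x y := by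
    intro x hx
    by_cases hxi : x ∈ int
    · have hNsub : N x ⊆ Ω := fun y hy => ((hint x).1 hxi).2 y hy
      rw [Finset.mul_sum]
      rw [← Finset.sum_subset hNsub (fun y _ hy => by simp only [hF, if_neg hy])]
      refine Finset.sum_congr rfl fun y hy => ?_
      simp only [hF, if_pos hy]; ring
    · rw [hw0 x hxi, zero_mul]
      refine (Finset.sum_eq_zero fun y _ => ?_).symm
      simp only [hF, hw0 x hxi]
      split <;> ring
  rw [step1, Finset.sum_congr rfl step2]
  have hterm : ∀ x y, F x y + F y x ≤ 0 := by
    intro x y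
    by_cases h : y ∈ N x
    · have h' : x ∈ N y := (hNsym x y).mpr h
      simp only [hF, if_pos h, if_pos h']
      have hω := (hωpos x y h).le
      rw [hωsym y x]
      nlinarith [sq_nonneg (w x - w y)]
    · have h' : x ∉ N y := fun hc => h ((hNsym x y).mp hc)
      simp only [hF, if_neg h, if_neg h']
      norm_num
  have hcomm : ∑ x ∈ Ω, ∑ y ∈ Ω, F x y = ∑ x ∈ Ω, ∑ y ∈ Ω, F y x := Finset.sum_comm
  have h2 : (∑ x ∈ Ω, ∑ y ∈ Ω, F x y) + (∑ x ∈ Ω, ∑ y ∈ Ω, F x y) ≤ 0 := by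
    nth_rewrite 2 [hcomm]
    rw [← Finset.sum_add_distrib]
    refine Finset.sum_nonpos fun x _ => ?_
    rw [← Finset.sum_add_distrib]
    exact Finset.sum_nonpos fun y _ => hterm x y
  linarith

/-- Uniqueness for the semilinear heat equation `∂ₜu + |u|^{p−1}u = Δu` on the interior of a
finite subset `Ω` of a locally finite weighted graph: two `C¹`-in-time solutions vanishing
outside `Ω° × [0,∞)` that agree at `t = 0` agree everywhere. -/
theorem heat_equation_uniqueness {V : Type*}
    (N : V → Finset V) (hNsym : ∀ x y, x ∈ N y ↔ y ∈ N x)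
    (ω : V → V → ℝ) (hωpos : ∀ x, ∀ y ∈ N x, 0 < ω x y)
    (hωsym : ∀ x y, ω x y = ω y x)
    (μ : V → ℝ) (hμ : ∀ x, 0 < μ x)
    (Ω int : Finset V)
    (hint : ∀ x, x ∈ int ↔ x ∈ Ω ∧ ∀ y ∈ N x, y ∈ Ω)
    (hne : int.Nonempty)
    (p : ℝ) (hp : 1 ≤ p)
    (u v : V → ℝ → ℝ) (u' v' : V → ℝ → ℝ)
    (hud : ∀ x t, 0 ≤ t → HasDerivAt (u x) (u' x t) t)
    (hvd : ∀ x t, 0 ≤ t → HasDerivAt (v x) (v' x t) t)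
    (hu0 : ∀ x ∉ int, ∀ t, 0 ≤ t → u x t = 0)
    (hv0 : ∀ x ∉ int, ∀ t, 0 ≤ t → v x t = 0)
    (hinit : ∀ x, u x 0 = v x 0)
    (hueq : ∀ x ∈ int, ∀ t, 0 ≤ t →
      u' x t + |u x t| ^ (p - 1) * u x t
        = (1 / μ x) * ∑ y ∈ N x, ω x y * (u y t - u x t))
    (hveq : ∀ x ∈ int, ∀ t, 0 ≤ t →
      v' x t + |v x t| ^ (p - 1) * v x t
        = (1 / μ x) * ∑ y ∈ N x, ω x y * (v y t - v x t)) :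
    ∀ x, ∀ t, 0 ≤ t → u x t = v x t := by
  classical
  set E : ℝ → ℝ := fun t => ∑ x ∈ int, μ x * (u x t - v x t) ^ 2 with hE
  set E' : ℝ → ℝ :=
    fun t => ∑ x ∈ int, μ x * (2 * (u x t - v x t) * (u' x t - v' x t)) with hE'
  have hEd : ∀ t, 0 ≤ t → HasDerivAt E (E' t) t := by
    intro t ht
    apply HasDerivAt.fun_sum
    intro x _
    have h1 := ((hud x t ht).sub (hvd x t ht)).pow 2
    have h2 := h1.const_mul (μ x)
    convert h2 using 1
    case e'_4 => rfl
    case e'_8 => rfl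
    push_cast [Pi.sub_apply]
    ring
  have hE'le : ∀ t, 0 ≤ t → E' t ≤ 0 := by
    intro t ht
    have key : E' t =
        2 * ∑ x ∈ int, (u x t - v x t) *
            ∑ y ∈ N x, ω x y * ((u y t - v y t) - (u x t - v x t))
        - ∑ x ∈ int, 2 * μ x * ((u x t - v x t) *
            (|u x t| ^ (p - 1) * u x t - |v x t| ^ (p - 1) * v x t)) := by
      rw [hE', Finset.mul_sum, ← Finset.sum_sub_distrib]
      refine Finset.sum_congr rfl fun x hx => ?_
      have h1 := hueq x hx t ht
      have h2 := hveq x hx t ht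
      have hμx : μ x ≠ 0 := (hμ x).ne'
      have hsum : (∑ y ∈ N x, ω x y * (u y t - u x t))
          - (∑ y ∈ N x, ω x y * (v y t - v x t))
          = ∑ y ∈ N x, ω x y * ((u y t - v y t) - (u x t - v x t)) := by
        rw [← Finset.sum_sub_distrib]
        exact Finset.sum_congr rfl fun y _ => by ring
      have hd : u' x t - v' x t =
          (1 / μ x) * ∑ y ∈ N x, ω x y * ((u y t - v y t) - (u x t - v x t))
          - (|u x t| ^ (p - 1) * u x t - |v x t| ^ (p - 1) * v x t) := by
        rw [← hsum, mul_sub]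
        linarith
      rw [hd]
      field_simp
    rw [key]
    have hA : ∑ x ∈ int, (u x t - v x t) *
        ∑ y ∈ N x, ω x y * ((u y t - v y t) - (u x t - v x t)) ≤ 0 := by
      exact heat_green N hNsym ω hωpos hωsym Ω int hint
        (fun x => u x t - v x t)
        (fun x hx => show u x t - v x t = 0 by rw [hu0 x hx t ht, hv0 x hx t ht, sub_self])
    have hB : 0 ≤ ∑ x ∈ int, 2 * μ x * ((u x t - v x t) *
        (|u x t| ^ (p - 1) * u x t - |v x t| ^ (p - 1) * v x t)) := by
      refine Finset.sum_nonneg fun x _ => ?_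
      exact mul_nonneg (by linarith [(hμ x).le]) (heat_mono hp (u x t) (v x t))
    linarith
  have hcont : ContinuousOn E (Set.Ici 0) :=
    fun t ht => (hEd t ht).continuousAt.continuousWithinAt
  have hanti : AntitoneOn E (Set.Ici 0) := by
    apply antitoneOn_of_deriv_nonpos (convex_Ici 0) hcont
    · intro t ht
      rw [interior_Ici] at ht
      exact (hEd t ht.le).differentiableAt.differentiableWithinAt
    · intro t ht
      rw [interior_Ici] at ht
      rw [(hEd t ht.le).deriv]
      exact hE'le t ht.le
  have hE0 : E 0 = 0 := by
    rw [hE]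
    exact Finset.sum_eq_zero fun x _ => by rw [hinit x]; ring
  have hEt0 : ∀ t, 0 ≤ t → E t = 0 := by
    intro t ht
    have hle := hanti Set.self_mem_Ici ht ht
    have hge : 0 ≤ E t :=
      Finset.sum_nonneg fun x _ => mul_nonneg (hμ x).le (sq_nonneg _)
    linarith
  intro x t ht
  by_cases hx : x ∈ int
  · have hz := (Finset.sum_eq_zero_iff_of_nonneg
      (fun x _ => mul_nonneg (hμ x).le (sq_nonneg _))).mp (hEt0 t ht) x hx
    have hsq : (u x t - v x t) ^ 2 = 0 := by
      rcases mul_eq_zero.mp hz with h | h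
      · exact absurd h (hμ x).ne'
      · exact h
    have := pow_eq_zero_iff (n := 2) (by norm_num) |>.mp hsq
    linarith [sub_eq_zero.mp this]
  · rw [hu0 x hx t ht, hv0 x hx t ht]
end

section
/- In the setting of the Lions–Stampacchia theorem with K = H a closed subspace: let a(v₁,v₂) = (1/ℓ)∑_{Ω°} v₁ v₂ μ − ∑_{Ω°} Δv₁ · v₂ μ on the space H_m of functions on a finite graph vanishing outside Ω°_m, with ℓ > 0. Then a is a coercive bilinear form: a(v,v) ≥ min{1/ℓ, 1}·‖v‖²_{W^{1,2}} for all v ∈ H_m, where ‖v‖²_{W^{1,2}} = ∑_{Ω_m}(Γ(v,v) + v²)μ. -/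
/-- Coercivity of the bilinear form `a(v₁,v₂) = (1/ℓ)∑_{Ω°} v₁v₂ μ − ∑_{Ω°} Δv₁·v₂ μ` on
functions vanishing outside the interior `Ω°_m` of a finite set `Ω_m`:
`a(v,v) ≥ min{1/ℓ, 1} · ‖v‖²_{W^{1,2}(Ω_m)}`, where
`‖v‖²_{W^{1,2}} = ∑_{Ω_m}(Γ(v,v) + v²)μ`. -/
theorem bilinear_form_coercive {V : Type*}
    (N : V → Finset V) (hNsym : ∀ x y, x ∈ N y ↔ y ∈ N x)
    (ω : V → V → ℝ) (hωpos : ∀ x, ∀ y ∈ N x, 0 < ω x y)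
    (hωsym : ∀ x y, ω x y = ω y x)
    (μ : V → ℝ) (hμ : ∀ x, 0 < μ x)
    (Ωm int : Finset V)
    (hint : ∀ x, x ∈ int ↔ x ∈ Ωm ∧ ∀ y ∈ N x, y ∈ Ωm)
    (ℓ : ℝ) (hℓ : 0 < ℓ)
    (v : V → ℝ) (h0 : ∀ x ∉ int, v x = 0) :
    min (1 / ℓ) 1 *
        ∑ x ∈ Ωm, (((1 / (2 * μ x)) * ∑ y ∈ N x, ω x y * (v y - v x) ^ 2) + v x ^ 2) * μ x
      ≤ (1 / ℓ) * ∑ x ∈ int, v x * v x * μ x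
        - ∑ x ∈ int, ((1 / μ x) * ∑ y ∈ N x, ω x y * (v y - v x)) * v x * μ x := by
  classical
  have hsub : int ⊆ Ωm := fun x hx => ((hint x).mp hx).1
  have hμne : ∀ x, μ x ≠ 0 := fun x => (hμ x).ne'
  set h : V → V → ℝ := fun x y => ω x y * (v y - v x) * v x with hh
  -- v vanishes outside Ωm
  have hv0 : ∀ x ∉ Ωm, v x = 0 := fun x hx => h0 x fun hi => hx (hsub hi)
  -- if x ∈ Ωm and some neighbor y of x is not in Ωm, then v x = 0
  have hvint : ∀ x, ∀ y ∈ N x, y ∉ Ωm → v x = 0 := by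
    intro x y hy hyΩ
    exact h0 x fun hxi => hyΩ (((hint x).mp hxi).2 y hy)
  -- Step 1: the swap identity
  have swap : ∑ x ∈ Ωm, ∑ y ∈ N x, h y x = ∑ x ∈ Ωm, ∑ y ∈ N x, h x y := by
    have h1 : ∑ x ∈ Ωm, ∑ y ∈ N x, h y x = ∑ x ∈ Ωm, ∑ y ∈ N x ∩ Ωm, h y x := by
      refine Finset.sum_congr rfl fun x hx => ?_
      refine (Finset.sum_subset Finset.inter_subset_left fun y hy hy2 => ?_).symm
      have hyΩ : y ∉ Ωm := fun hΩ => hy2 (Finset.mem_inter.mpr ⟨hy, hΩ⟩)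
      simp [hh, hv0 y hyΩ]
    have h2 : ∑ x ∈ Ωm, ∑ y ∈ N x ∩ Ωm, h y x
        = ∑ y ∈ Ωm, ∑ x ∈ N y ∩ Ωm, h y x := by
      refine Finset.sum_comm' ?_
      intro x y
      simp only [Finset.mem_inter]
      constructor
      · rintro ⟨hx, hy1, hy2⟩
        exact ⟨⟨(hNsym x y).mpr hy1, hx⟩, hy2⟩
      · rintro ⟨⟨hx1, hx2⟩, hy⟩
        exact ⟨hx2, (hNsym x y).mp hx1, hy⟩
    have h3 : ∑ y ∈ Ωm, ∑ x ∈ N y ∩ Ωm, h y x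
        = ∑ x ∈ Ωm, ∑ y ∈ N x, h x y := by
      refine Finset.sum_congr rfl fun x hx => ?_
      refine Finset.sum_subset Finset.inter_subset_left fun y hy hy2 => ?_
      have hyΩ : y ∉ Ωm := fun hΩ => hy2 (Finset.mem_inter.mpr ⟨hy, hΩ⟩)
      simp [hh, hvint x y hy hyΩ]
    rw [h1, h2, h3]
  -- Step 2: restrict the outer sum from Ωm to int
  have hrestr : ∑ x ∈ Ωm, ∑ y ∈ N x, h x y = ∑ x ∈ int, ∑ y ∈ N x, h x y := by
    refine (Finset.sum_subset hsub fun x hx hxi => ?_).symm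
    simp [hh, h0 x hxi]
  -- Step 3: the Laplacian term without μ
  have hS : ∑ x ∈ int, ((1 / μ x) * ∑ y ∈ N x, ω x y * (v y - v x)) * v x * μ x
      = ∑ x ∈ int, ∑ y ∈ N x, h x y := by
    refine Finset.sum_congr rfl fun x hx => ?_
    have e : ((1 / μ x) * ∑ y ∈ N x, ω x y * (v y - v x)) * v x * μ x
        = (∑ y ∈ N x, ω x y * (v y - v x)) * v x := by
      have hc : 1 / μ x * μ x = 1 := one_div_mul_cancel (hμne x)
      calc ((1 / μ x) * ∑ y ∈ N x, ω x y * (v y - v x)) * v x * μ x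
          = (1 / μ x * μ x) * ((∑ y ∈ N x, ω x y * (v y - v x)) * v x) := by ring
        _ = (∑ y ∈ N x, ω x y * (v y - v x)) * v x := by rw [hc, one_mul]
    rw [e, Finset.sum_mul]
  -- Step 4: the Γ-energy term equals minus the Laplacian term
  have hA : ∑ x ∈ Ωm, ((1 / (2 * μ x)) * ∑ y ∈ N x, ω x y * (v y - v x) ^ 2) * μ x
      = - ∑ x ∈ int, ((1 / μ x) * ∑ y ∈ N x, ω x y * (v y - v x)) * v x * μ x := by
    have step : ∑ x ∈ Ωm, ((1 / (2 * μ x)) * ∑ y ∈ N x, ω x y * (v y - v x) ^ 2) * μ x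
        = -(1 / 2) * (∑ x ∈ Ωm, ∑ y ∈ N x, h x y + ∑ x ∈ Ωm, ∑ y ∈ N x, h y x) := by
      rw [← Finset.sum_add_distrib, Finset.mul_sum]
      refine Finset.sum_congr rfl fun x hx => ?_
      have e : ((1 / (2 * μ x)) * ∑ y ∈ N x, ω x y * (v y - v x) ^ 2) * μ x
          = (1 / 2) * ∑ y ∈ N x, ω x y * (v y - v x) ^ 2 := by
        have hc : 1 / (2 * μ x) * μ x = 1 / 2 := by
          field_simp
          exact div_self (hμne x)
        calc ((1 / (2 * μ x)) * ∑ y ∈ N x, ω x y * (v y - v x) ^ 2) * μ x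
            = (1 / (2 * μ x) * μ x) * ∑ y ∈ N x, ω x y * (v y - v x) ^ 2 := by ring
          _ = _ := by rw [hc]
      rw [e, ← Finset.sum_add_distrib, Finset.mul_sum, Finset.mul_sum]
      refine Finset.sum_congr rfl fun y hy => ?_
      simp only [hh]
      rw [hωsym y x]
      ring
    rw [step, swap, hrestr, hS]
    ring
  -- Step 5: the potential term
  have hB : ∑ x ∈ Ωm, v x ^ 2 * μ x = ∑ x ∈ int, v x * v x * μ x := by
    rw [← Finset.sum_subset hsub (fun x hx hxi => by rw [h0 x hxi]; ring)]
    exact Finset.sum_congr rfl fun x _ => by ring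
  -- Split the left-hand sum
  have hsplit : ∑ x ∈ Ωm, (((1 / (2 * μ x)) * ∑ y ∈ N x, ω x y * (v y - v x) ^ 2) + v x ^ 2) * μ x
      = (∑ x ∈ Ωm, ((1 / (2 * μ x)) * ∑ y ∈ N x, ω x y * (v y - v x) ^ 2) * μ x)
        + ∑ x ∈ Ωm, v x ^ 2 * μ x := by
    rw [← Finset.sum_add_distrib]
    exact Finset.sum_congr rfl fun x _ => by ring
  -- Nonnegativity of both parts
  have hApos : 0 ≤ ∑ x ∈ Ωm, ((1 / (2 * μ x)) * ∑ y ∈ N x, ω x y * (v y - v x) ^ 2) * μ x := by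
    refine Finset.sum_nonneg fun x _ => ?_
    refine mul_nonneg (mul_nonneg (one_div_nonneg.mpr (by linarith [hμ x])) ?_) (hμ x).le
    exact Finset.sum_nonneg fun y hy => mul_nonneg (hωpos x y hy).le (sq_nonneg _)
  have hBpos : 0 ≤ ∑ x ∈ Ωm, v x ^ 2 * μ x :=
    Finset.sum_nonneg fun x _ => mul_nonneg (sq_nonneg _) (hμ x).le
  -- Conclude
  have hm1 : min (1 / ℓ) 1 ≤ 1 / ℓ := min_le_left _ _
  have hm2 : min (1 / ℓ) 1 ≤ 1 := min_le_right _ _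
  rw [hsplit, ← hB, mul_add]
  nlinarith [mul_nonneg (sub_nonneg.mpr hm1) hBpos, mul_nonneg (sub_nonneg.mpr hm2) hApos, hA]
end

section
/- Let Ω be a finite graph-domain with Ω° ≠ ∅ and let f : Ω° × [0,∞) → ℝ. Suppose ũ and û are both C¹-in-t solutions of the parabolic variational inequality ∑_{Ω°} ∂_t u·(v−u) μ ≥ ∑_{Ω°} (Δu + f)·(v−u) μ for all v in the space H of functions vanishing outside Ω°, with ũ(·,0) = û(·,0) and both vanishing outside Ω°. Then ũ = û. -/
/-- Uniqueness for the parabolic variational inequality on the interior `Ω°` of a finite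
graph-domain `Ω`: two `C¹`-in-time solutions of
`∑_{Ω°} ∂ₜu (v − u) μ ≥ ∑_{Ω°} (Δu + f)(v − u) μ` (for all test functions `v` vanishing
outside `Ω°`) that vanish outside `Ω°` and agree at `t = 0` coincide. -/
theorem parabolic_vi_uniqueness {V : Type*}
    (N : V → Finset V) (hNsym : ∀ x y, x ∈ N y ↔ y ∈ N x)
    (ω : V → V → ℝ) (hωpos : ∀ x, ∀ y ∈ N x, 0 < ω x y)
    (hωsym : ∀ x y, ω x y = ω y x)
    (μ : V → ℝ) (hμ : ∀ x, 0 < μ x)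
    (Ω int : Finset V)
    (hint : ∀ x, x ∈ int ↔ x ∈ Ω ∧ ∀ y ∈ N x, y ∈ Ω)
    (hne : int.Nonempty)
    (f : V → ℝ → ℝ)
    (u w : V → ℝ → ℝ) (u' w' : V → ℝ → ℝ)
    (hud : ∀ x t, 0 ≤ t → HasDerivAt (u x) (u' x t) t)
    (hwd : ∀ x t, 0 ≤ t → HasDerivAt (w x) (w' x t) t)
    (hu0 : ∀ x ∉ int, ∀ t, 0 ≤ t → u x t = 0)
    (hw0 : ∀ x ∉ int, ∀ t, 0 ≤ t → w x t = 0)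
    (hinit : ∀ x, u x 0 = w x 0)
    (huVI : ∀ t, 0 ≤ t → ∀ v : V → ℝ, (∀ x ∉ int, v x = 0) →
      ∑ x ∈ int, ((1 / μ x) * ∑ y ∈ N x, ω x y * (u y t - u x t) + f x t)
          * (v x - u x t) * μ x
        ≤ ∑ x ∈ int, u' x t * (v x - u x t) * μ x)
    (hwVI : ∀ t, 0 ≤ t → ∀ v : V → ℝ, (∀ x ∉ int, v x = 0) →
      ∑ x ∈ int, ((1 / μ x) * ∑ y ∈ N x, ω x y * (w y t - w x t) + f x t)
          * (v x - w x t) * μ x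
        ≤ ∑ x ∈ int, w' x t * (v x - w x t) * μ x) :
    ∀ x, ∀ t, 0 ≤ t → u x t = w x t := by
  classical
  have hsub : int ⊆ Ω := fun x hx => ((hint x).1 hx).1
  -- Key dissipativity estimate
  have key : ∀ t, 0 ≤ t →
      ∑ x ∈ int, (u' x t - w' x t) * (u x t - w x t) * μ x ≤ 0 := by
    intro t ht
    set d : V → ℝ := fun x => u x t - w x t with hd
    have hd0 : ∀ x ∉ int, d x = 0 := by
      intro x hx; simp only [hd]; rw [hu0 x hx t ht, hw0 x hx t ht]; ring
    -- Laplacian quadratic form is nonpositive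
    have hΔ : ∑ x ∈ int, ((1 / μ x) * ∑ y ∈ N x, ω x y * (d y - d x)) * d x * μ x ≤ 0 := by
      have step1 : ∑ x ∈ int, ((1 / μ x) * ∑ y ∈ N x, ω x y * (d y - d x)) * d x * μ x
          = ∑ x ∈ int, ∑ y ∈ N x, ω x y * (d y - d x) * d x := by
        refine Finset.sum_congr rfl fun x _ => ?_
        have hμx := (hμ x).ne'
        have h : ((1 / μ x) * ∑ y ∈ N x, ω x y * (d y - d x)) * d x * μ x
            = (∑ y ∈ N x, ω x y * (d y - d x)) * d x := by
          field_simp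
        rw [h, Finset.sum_mul]
      rw [step1]
      have step2 : ∑ x ∈ int, ∑ y ∈ N x, ω x y * (d y - d x) * d x
          = ∑ x ∈ Ω, ∑ y ∈ Ω, (if y ∈ N x then ω x y * (d y - d x) * d x else 0) := by
        rw [← Finset.sum_subset hsub]
        · refine Finset.sum_congr rfl fun x hx => ?_
          have hNΩ : ∀ y ∈ N x, y ∈ Ω := ((hint x).1 hx).2
          rw [← Finset.sum_filter]
          refine Finset.sum_congr ?_ fun y _ => rfl
          ext y
          simp only [Finset.mem_filter]
          exact ⟨fun h => ⟨hNΩ y h, h⟩, fun h => h.2⟩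
        · intro x _ hx
          refine Finset.sum_eq_zero fun y _ => ?_
          rw [hd0 x hx]; split <;> simp
      rw [step2]
      have twice : (2 : ℝ) * ∑ x ∈ Ω, ∑ y ∈ Ω, (if y ∈ N x then ω x y * (d y - d x) * d x else 0)
          = ∑ x ∈ Ω, ∑ y ∈ Ω, (if y ∈ N x then -(ω x y * (d y - d x) ^ 2) else 0) := by
        rw [two_mul]
        nth_rewrite 2 [Finset.sum_comm]
        rw [← Finset.sum_add_distrib]
        refine Finset.sum_congr rfl fun x _ => ?_
        rw [← Finset.sum_add_distrib]
        refine Finset.sum_congr rfl fun y _ => ?_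
        by_cases h : y ∈ N x
        · rw [if_pos h, if_pos h, if_pos ((hNsym x y).2 h)]
          rw [hωsym y x]
          ring
        · rw [if_neg h, if_neg h, if_neg (fun hc => h ((hNsym x y).1 hc))]
          ring
      have hnonpos : ∑ x ∈ Ω, ∑ y ∈ Ω, (if y ∈ N x then -(ω x y * (d y - d x) ^ 2) else 0) ≤ 0 := by
        refine Finset.sum_nonpos fun x _ => Finset.sum_nonpos fun y _ => ?_
        split
        · next h =>
          have := hωpos x y h
          nlinarith [sq_nonneg (d y - d x)]
        · exact le_rfl
      nlinarith [twice, hnonpos]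
    -- combine the two variational inequalities
    have h1 := huVI t ht (fun x => w x t) (fun x hx => hw0 x hx t ht)
    have h2 := hwVI t ht (fun x => u x t) (fun x hx => hu0 x hx t ht)
    have hsum := add_le_add h1 h2
    rw [← Finset.sum_add_distrib, ← Finset.sum_add_distrib] at hsum
    have e1 : ∑ x ∈ int,
        (((1 / μ x) * ∑ y ∈ N x, ω x y * (u y t - u x t) + f x t) * ((fun x => w x t) x - u x t) * μ x
          + ((1 / μ x) * ∑ y ∈ N x, ω x y * (w y t - w x t) + f x t) * ((fun x => u x t) x - w x t) * μ x)
        = -∑ x ∈ int, ((1 / μ x) * ∑ y ∈ N x, ω x y * (d y - d x)) * d x * μ x := by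
      rw [← Finset.sum_neg_distrib]
      refine Finset.sum_congr rfl fun x _ => ?_
      have hS : ∑ y ∈ N x, ω x y * (d y - d x)
          = ∑ y ∈ N x, ω x y * (u y t - u x t) - ∑ y ∈ N x, ω x y * (w y t - w x t) := by
        rw [← Finset.sum_sub_distrib]
        refine Finset.sum_congr rfl fun y _ => ?_
        simp only [hd]; ring
      rw [hS]
      simp only [hd]
      ring
    have e2 : ∑ x ∈ int,
        (u' x t * ((fun x => w x t) x - u x t) * μ x + w' x t * ((fun x => u x t) x - w x t) * μ x)
        = -∑ x ∈ int, (u' x t - w' x t) * (u x t - w x t) * μ x := by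
      rw [← Finset.sum_neg_distrib]
      refine Finset.sum_congr rfl fun x _ => ?_
      ring
    rw [e1, e2] at hsum
    simp only [hd] at hΔ
    linarith
  -- energy function
  set g : ℝ → ℝ := fun t => ∑ x ∈ int, (u x t - w x t) * (u x t - w x t) * μ x with hg
  have hgd : ∀ t, 0 ≤ t → HasDerivAt g
      (∑ x ∈ int, ((u' x t - w' x t) * (u x t - w x t) + (u x t - w x t) * (u' x t - w' x t)) * μ x) t := by
    intro t ht
    exact HasDerivAt.fun_sum fun x _ =>
      ((((hud x t ht).sub (hwd x t ht)).mul ((hud x t ht).sub (hwd x t ht))).mul_const (μ x))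
  have hganti : AntitoneOn g (Set.Ici (0:ℝ)) := by
    refine antitoneOn_of_deriv_nonpos (convex_Ici 0) ?_ ?_ ?_
    · exact fun t ht => ((hgd t ht).continuousAt).continuousWithinAt
    · intro t ht
      rw [interior_Ici] at ht
      exact ((hgd t (le_of_lt ht)).differentiableAt).differentiableWithinAt
    · intro t ht
      rw [interior_Ici] at ht
      rw [(hgd t (le_of_lt ht)).deriv]
      have hk := key t (le_of_lt ht)
      have : ∑ x ∈ int, ((u' x t - w' x t) * (u x t - w x t) + (u x t - w x t) * (u' x t - w' x t)) * μ x
          = 2 * ∑ x ∈ int, (u' x t - w' x t) * (u x t - w x t) * μ x := by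
        rw [Finset.mul_sum]
        refine Finset.sum_congr rfl fun x _ => ?_
        ring
      rw [this]
      linarith
  have hg0 : g 0 = 0 := by
    refine Finset.sum_eq_zero fun x _ => ?_
    rw [hinit x]; ring
  have hgzero : ∀ t, 0 ≤ t → g t = 0 := by
    intro t ht
    have h1 : g t ≤ g 0 := hganti Set.self_mem_Ici ht ht
    have h2 : 0 ≤ g t := Finset.sum_nonneg fun x _ => by
      have := (hμ x).le
      nlinarith [mul_self_nonneg (u x t - w x t)]
    linarith [hg0]
  intro x t ht
  by_cases hx : x ∈ int
  · have := hgzero t ht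
    have hterm : (u x t - w x t) * (u x t - w x t) * μ x = 0 := by
      have hnn : ∀ y ∈ int, 0 ≤ (u y t - w y t) * (u y t - w y t) * μ y := fun y _ => by
        have := (hμ y).le
        nlinarith [mul_self_nonneg (u y t - w y t)]
      exact (Finset.sum_eq_zero_iff_of_nonneg hnn).1 this x hx
    have h2 : (u x t - w x t) * (u x t - w x t) = 0 := by
      rcases mul_eq_zero.1 hterm with h | h
      · exact h
      · exact absurd h (hμ x).ne'
    have h3 := mul_self_eq_zero.1 h2
    linarith
  · rw [hu0 x hx t ht, hw0 x hx t ht]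
end

section
/- Let Ω be finite, ℓ > 0, and let u_{n,0}, …, u_{n,n} be functions vanishing outside Ω° satisfying for each i ≥ 1 the variational inequality ∑_{Ω°}((u_{n,i}−u_{n,i−1})/ℓ)(v−u_{n,i})μ ≥ ∑_{Ω°}(Δu_{n,i}+f_{n,i})(v−u_{n,i})μ for all v vanishing outside Ω°. Then for all j ≥ 2, ‖(u_{n,j}−u_{n,j−1})/ℓ‖_{L²(Ω°)} ≤ ‖(u_{n,j−1}−u_{n,j−2})/ℓ‖_{L²(Ω°)} + ‖f_{n,j}−f_{n,j−1}‖_{L²(Ω°)}. -/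
/-- Weighted Cauchy–Schwarz on a finset. -/
lemma cs_weighted {V : Type*} (s : Finset V) (μ g h : V → ℝ) (hμ : ∀ x, 0 ≤ μ x) :
    ∑ x ∈ s, g x * h x * μ x
      ≤ Real.sqrt (∑ x ∈ s, g x ^ 2 * μ x) * Real.sqrt (∑ x ∈ s, h x ^ 2 * μ x) := by
  have h1 : ∑ x ∈ s, g x * h x * μ x
      = ∑ x ∈ s, (g x * Real.sqrt (μ x)) * (h x * Real.sqrt (μ x)) := by
    refine Finset.sum_congr rfl fun x _ => ?_
    linear_combination g x * h x * (Real.mul_self_sqrt (hμ x)).symm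
  have h2 : ∀ k : V → ℝ, ∑ x ∈ s, (k x * Real.sqrt (μ x)) ^ 2 = ∑ x ∈ s, k x ^ 2 * μ x := by
    intro k
    refine Finset.sum_congr rfl fun x _ => ?_
    rw [mul_pow, Real.sq_sqrt (hμ x)]
  rw [h1, ← h2 g, ← h2 h]
  exact Real.sum_mul_le_sqrt_mul_sqrt s _ _

/-- Discrete Green/nonnegativity: the Laplacian form is nonpositive. -/
lemma green_nonpos {V : Type*} (N : V → Finset V) (hNsym : ∀ x y, x ∈ N y ↔ y ∈ N x)
    (ω : V → V → ℝ) (hω : ∀ x, ∀ y ∈ N x, 0 < ω x y) (hωsym : ∀ x y, ω x y = ω y x)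
    (μ : V → ℝ) (hμ : ∀ x, 0 < μ x) (int : Finset V) (w : V → ℝ)
    (hw : ∀ x ∉ int, w x = 0) :
    ∑ x ∈ int, (1 / μ x * ∑ y ∈ N x, ω x y * (w y - w x)) * w x * μ x ≤ 0 := by
  classical
  have hstep : ∑ x ∈ int, (1 / μ x * ∑ y ∈ N x, ω x y * (w y - w x)) * w x * μ x
      = ∑ x ∈ int, ∑ y ∈ N x, ω x y * (w y - w x) * w x := by
    refine Finset.sum_congr rfl fun x _ => ?_
    have hμx : μ x ≠ 0 := (hμ x).ne'
    rw [show (1 / μ x * ∑ y ∈ N x, ω x y * (w y - w x)) * w x * μ x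
        = (∑ y ∈ N x, ω x y * (w y - w x)) * w x from by field_simp, Finset.sum_mul]
  rw [hstep]
  set T := int ∪ int.biUnion N with hT
  have hsubT : int ⊆ T := Finset.subset_union_left
  have hNT : ∀ x ∈ int, N x ⊆ T := fun x hx y hy =>
    Finset.subset_union_right (Finset.mem_biUnion.mpr ⟨x, hx, hy⟩)
  have h1 : ∑ x ∈ int, ∑ y ∈ N x, ω x y * (w y - w x) * w x
      = ∑ x ∈ T, ∑ y ∈ N x, ω x y * (w y - w x) * w x := by
    apply Finset.sum_subset hsubT
    intro x _ hx
    simp [hw x hx]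
  have h2 : ∀ x ∈ T, ∑ y ∈ N x, ω x y * (w y - w x) * w x
      = ∑ y ∈ T, if y ∈ N x then ω x y * (w y - w x) * w x else 0 := by
    intro x hxT
    rw [Finset.sum_ite_mem]
    by_cases hx : x ∈ int
    · have : T ∩ N x = N x := Finset.inter_eq_right.mpr (hNT x hx)
      rw [this]
    · simp [hw x hx]
  rw [h1, Finset.sum_congr rfl h2]
  set g : V → V → ℝ := fun x y => if y ∈ N x then ω x y * (w y - w x) * w x else 0 with hg
  have hswap : ∑ x ∈ T, ∑ y ∈ T, g x y = ∑ x ∈ T, ∑ y ∈ T, g y x := Finset.sum_comm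
  have hsum : (∑ x ∈ T, ∑ y ∈ T, g x y) + (∑ x ∈ T, ∑ y ∈ T, g x y)
      = ∑ x ∈ T, ∑ y ∈ T, (g x y + g y x) := by
    nth_rewrite 2 [hswap]
    rw [← Finset.sum_add_distrib]
    exact Finset.sum_congr rfl fun x _ => (Finset.sum_add_distrib).symm
  have hterm : ∀ x ∈ T, ∀ y ∈ T, g x y + g y x ≤ 0 := by
    intro x _ y _
    by_cases hy : y ∈ N x
    · have hx : x ∈ N y := (hNsym x y).mpr hy
      have hωpos : 0 < ω x y := hω x y hy
      simp only [hg, if_pos hy, if_pos hx, hωsym y x]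
      nlinarith [sq_nonneg (w y - w x)]
    · have hx : x ∉ N y := fun h => hy ((hNsym x y).mp h)
      simp [hg, hy, hx]
  have : ∑ x ∈ T, ∑ y ∈ T, (g x y + g y x) ≤ 0 :=
    Finset.sum_nonpos fun x hx => Finset.sum_nonpos fun y hy => hterm x hx y hy
  have := hsum ▸ this
  linarith

/-- Recursive estimate for the discrete time derivatives in Rothe's scheme for the
parabolic variational inequality: if `u_{n,0}, …, u_{n,n}` vanish outside `Ω°` and satisfy
the variational inequalities, then for `2 ≤ j ≤ n`,
`‖(u_{n,j}−u_{n,j−1})/ℓ‖_{L²} ≤ ‖(u_{n,j−1}−u_{n,j−2})/ℓ‖_{L²} + ‖f_{n,j}−f_{n,j−1}‖_{L²}`. -/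
theorem rothe_recursive_estimate {V : Type*}
    (N : V → Finset V) (hNsym : ∀ x y, x ∈ N y ↔ y ∈ N x)
    (ω : V → V → ℝ) (hωpos : ∀ x, ∀ y ∈ N x, 0 < ω x y)
    (hωsym : ∀ x y, ω x y = ω y x)
    (μ : V → ℝ) (hμ : ∀ x, 0 < μ x)
    (int : Finset V) (ℓ : ℝ) (hℓ : 0 < ℓ) (n : ℕ)
    (u f : ℕ → V → ℝ)
    (h0 : ∀ i ≤ n, ∀ x ∉ int, u i x = 0)
    (hVI : ∀ i, 1 ≤ i → i ≤ n → ∀ v : V → ℝ, (∀ x ∉ int, v x = 0) →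
      ∑ x ∈ int, (((1 / μ x) * ∑ y ∈ N x, ω x y * (u i y - u i x)) + f i x)
          * (v x - u i x) * μ x
        ≤ ∑ x ∈ int, ((u i x - u (i - 1) x) / ℓ) * (v x - u i x) * μ x) :
    ∀ j, 2 ≤ j → j ≤ n →
      Real.sqrt (∑ x ∈ int, ((u j x - u (j - 1) x) / ℓ) ^ 2 * μ x)
        ≤ Real.sqrt (∑ x ∈ int, ((u (j - 1) x - u (j - 2) x) / ℓ) ^ 2 * μ x)
          + Real.sqrt (∑ x ∈ int, (f j x - f (j - 1) x) ^ 2 * μ x) := by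
  intro j hj2 hjn
  have I1 := hVI j (by omega) hjn (u (j - 1)) (fun x hx => h0 (j - 1) (by omega) x hx)
  have I2 := hVI (j - 1) (by omega) (by omega) (u j) (fun x hx => h0 j hjn x hx)
  rw [show j - 1 - 1 = j - 2 from by omega] at I2
  have hG := green_nonpos N hNsym ω hωpos hωsym μ hμ int
      (fun x => u j x - u (j - 1) x)
      (fun x hx => by show u j x - u (j - 1) x = 0
                      rw [h0 j hjn x hx, h0 (j - 1) (by omega) x hx]; ring)
  -- combined key inequality
  have key : ∑ x ∈ int, ((u j x - u (j - 1) x) / ℓ) * (u j x - u (j - 1) x) * μ x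
      ≤ ∑ x ∈ int, ((u (j - 1) x - u (j - 2) x) / ℓ) * (u j x - u (j - 1) x) * μ x
        + ∑ x ∈ int, (f j x - f (j - 1) x) * (u j x - u (j - 1) x) * μ x := by
    have E1 : (∑ x ∈ int, (((1 / μ x) * ∑ y ∈ N x, ω x y * (u j y - u j x)) + f j x)
            * (u (j - 1) x - u j x) * μ x)
        + (∑ x ∈ int, (((1 / μ x) * ∑ y ∈ N x, ω x y * (u (j - 1) y - u (j - 1) x)) + f (j - 1) x)
            * (u j x - u (j - 1) x) * μ x)
        + (∑ x ∈ int, (1 / μ x * ∑ y ∈ N x, ω x y * ((u j y - u (j - 1) y) - (u j x - u (j - 1) x)))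
            * (u j x - u (j - 1) x) * μ x)
        + (∑ x ∈ int, (f j x - f (j - 1) x) * (u j x - u (j - 1) x) * μ x) = 0 := by
      rw [← Finset.sum_add_distrib, ← Finset.sum_add_distrib, ← Finset.sum_add_distrib]
      refine Finset.sum_eq_zero fun x _ => ?_
      have hC : ∑ y ∈ N x, ω x y * ((u j y - u (j - 1) y) - (u j x - u (j - 1) x))
          = (∑ y ∈ N x, ω x y * (u j y - u j x))
            - ∑ y ∈ N x, ω x y * (u (j - 1) y - u (j - 1) x) := by
        rw [← Finset.sum_sub_distrib]
        exact Finset.sum_congr rfl fun y _ => by ring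
      rw [hC]
      have hμx : μ x ≠ 0 := (hμ x).ne'
      field_simp
      ring
    have E2 : (∑ x ∈ int, ((u j x - u (j - 1) x) / ℓ) * (u (j - 1) x - u j x) * μ x)
        + (∑ x ∈ int, ((u j x - u (j - 1) x) / ℓ) * (u j x - u (j - 1) x) * μ x) = 0 := by
      rw [← Finset.sum_add_distrib]
      exact Finset.sum_eq_zero fun x _ => by ring
    linarith [I1, I2, hG, E1, E2]
  set A := Real.sqrt (∑ x ∈ int, ((u j x - u (j - 1) x) / ℓ) ^ 2 * μ x) with hA
  set B := Real.sqrt (∑ x ∈ int, ((u (j - 1) x - u (j - 2) x) / ℓ) ^ 2 * μ x) with hB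
  set C := Real.sqrt (∑ x ∈ int, (f j x - f (j - 1) x) ^ 2 * μ x) with hC
  have hμ0 : ∀ x, 0 ≤ μ x := fun x => (hμ x).le
  have hSww : ∑ x ∈ int, ((u j x - u (j - 1) x) / ℓ) * (u j x - u (j - 1) x) * μ x
      = ℓ * ∑ x ∈ int, ((u j x - u (j - 1) x) / ℓ) ^ 2 * μ x := by
    rw [Finset.mul_sum]
    refine Finset.sum_congr rfl fun x _ => ?_
    field_simp <;> ring
  have hSzw : ∑ x ∈ int, ((u (j - 1) x - u (j - 2) x) / ℓ) * (u j x - u (j - 1) x) * μ x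
      = ℓ * ∑ x ∈ int, ((u (j - 1) x - u (j - 2) x) / ℓ) * ((u j x - u (j - 1) x) / ℓ) * μ x := by
    rw [Finset.mul_sum]
    refine Finset.sum_congr rfl fun x _ => ?_
    field_simp <;> ring
  have hD : ∑ x ∈ int, (f j x - f (j - 1) x) * (u j x - u (j - 1) x) * μ x
      = ℓ * ∑ x ∈ int, (f j x - f (j - 1) x) * ((u j x - u (j - 1) x) / ℓ) * μ x := by
    rw [Finset.mul_sum]
    refine Finset.sum_congr rfl fun x _ => ?_
    field_simp <;> ring
  have hCS1 : ∑ x ∈ int, ((u (j - 1) x - u (j - 2) x) / ℓ) * ((u j x - u (j - 1) x) / ℓ) * μ x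
      ≤ B * A := cs_weighted int μ _ _ hμ0
  have hCS2 : ∑ x ∈ int, (f j x - f (j - 1) x) * ((u j x - u (j - 1) x) / ℓ) * μ x
      ≤ C * A := cs_weighted int μ _ _ hμ0
  have hA2 : A ^ 2 = ∑ x ∈ int, ((u j x - u (j - 1) x) / ℓ) ^ 2 * μ x :=
    Real.sq_sqrt (Finset.sum_nonneg fun x _ => mul_nonneg (sq_nonneg _) (hμ x).le)
  have hmain : ℓ * A ^ 2 ≤ ℓ * ((B + C) * A) := by
    rw [hA2]
    calc ℓ * ∑ x ∈ int, ((u j x - u (j - 1) x) / ℓ) ^ 2 * μ x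
        ≤ ℓ * (B * A) + ℓ * (C * A) := by
          rw [← hSww]
          calc _ ≤ _ := key
          _ ≤ _ := by
            rw [hSzw, hD]
            have h1 := mul_le_mul_of_nonneg_left hCS1 hℓ.le
            have h2 := mul_le_mul_of_nonneg_left hCS2 hℓ.le
            linarith
      _ = ℓ * ((B + C) * A) := by ring
  have hAA : A ^ 2 ≤ (B + C) * A := le_of_mul_le_mul_left hmain hℓ
  have hA0 : 0 ≤ A := Real.sqrt_nonneg _
  rcases hA0.eq_or_lt with h | h
  · have hB0 : 0 ≤ B := Real.sqrt_nonneg _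
    have hC0 : 0 ≤ C := Real.sqrt_nonneg _
    linarith
  · have : A * A ≤ (B + C) * A := by nlinarith
    exact le_of_mul_le_mul_right this h
end
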